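/- Let q be a prime power, k ≥ 2 an integer, and t = ⌊(k+2)/4⌋. If two vertices x and y of D(k,q) lie in the same connected component of D(k,q), then a(x) = a(y); i.e., the vector-valued map a is constant on each connected component of D(k,q). -/

import Mathlib

/-- Extend a vector `Fin k → F` to `ℕ → F` by zeros. -/
def extD {F : Type} [Zero F] {k : ℕ} (v : Fin k → F) : ℕ → F :=
  fun m => if h : m < k then v ⟨m, h⟩ else 0

/-- Right-hand side of the `m`-th incidence equation of `D(k,q)`
(coordinates are numbered from `0`, so the `m`-th equation concerns the
coordinate with index `m`). -/
def rhsD {F : Type} [Mul F] (p l : ℕ → F) : ℕ → F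
  | 1 => l 0 * p 0
  | 2 => l 1 * p 0
  | m => if m % 4 = 0 ∨ m % 4 = 3 then l 0 * p (m - 2) else l (m - 2) * p 0

/-- The incidence relation between a point `p` and a line `l`:
the first `k - 1` incidence equations hold. -/
def incD {F : Type} [Field F] (k : ℕ) (p l : Fin k → F) : Prop :=
  ∀ m, 1 ≤ m → m < k → extD l m - extD p m = rhsD (extD p) (extD l) m

/-- The bipartite graph `D(k,q)`; vertices are points (`Sum.inl`) and
lines (`Sum.inr`), both copies of `GF(q)^k`. -/
def DGraph (k : ℕ) (F : Type) [Field F] :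
    SimpleGraph ((Fin k → F) ⊕ (Fin k → F)) where
  Adj x y :=
    match x, y with
    | Sum.inl p, Sum.inr l => incD k p l
    | Sum.inr l, Sum.inl p => incD k p l
    | Sum.inl _, Sum.inl _ => False
    | Sum.inr _, Sum.inr _ => False
  symm := ⟨by rintro (p | l) (p' | l') h <;> exact h⟩
  loopless := ⟨by rintro (p | l) h <;> exact h⟩


/-- `u_{ii}` (with the convention `u_{00} = -1`). -/
def ddD {F : Type} [Field F] (u : ℕ → F) : ℕ → F
  | 0 => -1
  | 1 => u 1
  | (i + 2) => u (4 * i + 4)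

/-- `u'_{ii}` (with the conventions `u'_{00} = 1`, `u'_{11} = u_{11}`). -/
def dd'D {F : Type} [Field F] (u : ℕ → F) : ℕ → F
  | 0 => 1
  | 1 => u 1
  | (i + 2) => u (4 * i + 5)

/-- `u_{i,i+1}`; for a point `p_{01} = p_1`, for a line `l_{01} = 0`. -/
def hiD {F : Type} [Field F] (isPt : Bool) (u : ℕ → F) : ℕ → F
  | 0 => if isPt then u 0 else 0
  | 1 => u 2
  | (i + 2) => u (4 * i + 6)

/-- `u_{i,i-1}`; `u_{0,-1} = 0`, and for a point `p_{10} = 0`,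
for a line `l_{10} = l_1`. -/
def loD {F : Type} [Field F] (isPt : Bool) (u : ℕ → F) : ℕ → F
  | 0 => 0
  | 1 => if isPt then 0 else u 0
  | (i + 2) => u (4 * i + 3)

/-- The invariant `a_r(x)` of a vertex `x` of `D(k,q)`. -/
def aD {F : Type} [Field F] {k : ℕ} (r : ℕ) (x : (Fin k → F) ⊕ (Fin k → F)) : F :=
  ∑ i ∈ Finset.range (r + 1),
    (ddD (extD (Sum.elim id id x)) i * dd'D (extD (Sum.elim id id x)) (r - i) -
      hiD x.isLeft (extD (Sum.elim id id x)) i * loD x.isLeft (extD (Sum.elim id id x)) (r - i))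

/-- The vector `a(x) = (a_2(x), …, a_t(x))`. -/
def aVecD {F : Type} [Field F] {k : ℕ} (t : ℕ) (x : (Fin k → F) ⊕ (Fin k → F)) :
    Fin (t - 1) → F :=
  fun j => aD (j.val + 2) x

open Finset in
lemma keyD {F : Type} [Field F] (r : ℕ) (A A' B C a a' b c : ℕ → F) (α β : F)
    (hA0 : a 0 = A 0) (hC0 : C 0 = 0) (hc0 : c 0 = 0)
    (h1 : ∀ i, 1 ≤ i → i ≤ r → a i = A i + α * B (i-1))
    (h2 : ∀ i, i ≤ r → a' i = A' i + c i * β)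
    (h3 : ∀ i, i + 1 ≤ r → b i = B i + a i * β)
    (h4 : ∀ i, 1 ≤ i → i ≤ r → c i = C i + α * A' (i-1)) :
    ∑ i ∈ range (r+1), (a i * a' (r-i) - b i * c (r-i)) =
    ∑ i ∈ range (r+1), (A i * A' (r-i) - B i * C (r-i)) := by
  have e1 : ∑ i ∈ range (r+1), a i * a' (r-i)
      = ∑ i ∈ range (r+1), A i * A' (r-i)
        + α * ∑ i ∈ range r, B i * A' (r-1-i)
        + β * ∑ i ∈ range (r+1), a i * c (r-i) := by
    have s1 : ∑ i ∈ range (r+1), a i * a' (r-i)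
        = ∑ i ∈ range (r+1), a i * A' (r-i) + β * ∑ i ∈ range (r+1), a i * c (r-i) := by
      rw [Finset.mul_sum, ← Finset.sum_add_distrib]
      refine Finset.sum_congr rfl fun i hi => ?_
      rw [h2 (r-i) (by omega)]; ring
    rw [s1, Finset.sum_range_succ' (fun i => a i * A' (r-i)),
        Finset.sum_range_succ' (fun i => A i * A' (r-i))]
    have s2 : ∑ i ∈ range r, a (i+1) * A' (r-(i+1))
        = ∑ i ∈ range r, A (i+1) * A' (r-(i+1)) + α * ∑ i ∈ range r, B i * A' (r-1-i) := by
      rw [Finset.mul_sum, ← Finset.sum_add_distrib]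
      refine Finset.sum_congr rfl fun i hi => ?_
      simp only [Finset.mem_range] at hi
      rw [h1 (i+1) (by omega) (by omega)]
      have : i + 1 - 1 = i := by omega
      have h' : r - (i+1) = r - 1 - i := by omega
      rw [this, h']; ring
    rw [s2, hA0]; ring
  have e2 : ∑ i ∈ range (r+1), b i * c (r-i)
      = ∑ i ∈ range (r+1), B i * C (r-i)
        + α * ∑ i ∈ range r, B i * A' (r-1-i)
        + β * ∑ i ∈ range (r+1), a i * c (r-i) := by
    rw [Finset.sum_range_succ (fun i => b i * c (r-i)),
        Finset.sum_range_succ (fun i => B i * C (r-i)),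
        Finset.sum_range_succ (fun i => a i * c (r-i))]
    simp only [Nat.sub_self, hc0, hC0, mul_zero, add_zero]
    have s3 : ∑ i ∈ range r, b i * c (r-i)
        = ∑ i ∈ range r, B i * c (r-i) + β * ∑ i ∈ range r, a i * c (r-i) := by
      rw [Finset.mul_sum, ← Finset.sum_add_distrib]
      refine Finset.sum_congr rfl fun i hi => ?_
      simp only [Finset.mem_range] at hi
      rw [h3 i (by omega)]; ring
    have s4 : ∑ i ∈ range r, B i * c (r-i)
        = ∑ i ∈ range r, B i * C (r-i) + α * ∑ i ∈ range r, B i * A' (r-1-i) := by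
      rw [Finset.mul_sum, ← Finset.sum_add_distrib]
      refine Finset.sum_congr rfl fun i hi => ?_
      simp only [Finset.mem_range] at hi
      rw [h4 (r-i) (by omega) (by omega)]
      have : r - i - 1 = r - 1 - i := by omega
      rw [this]; ring
    rw [s3, s4]
  rw [Finset.sum_sub_distrib, Finset.sum_sub_distrib, e1, e2]; ring

lemma rhsD_big {F : Type} [Mul F] (p l : ℕ → F) (m : ℕ) (hm : 3 ≤ m) :
    rhsD p l m = if m % 4 = 0 ∨ m % 4 = 3 then l 0 * p (m - 2) else l (m - 2) * p 0 := by
  obtain ⟨n, rfl⟩ : ∃ n, m = n + 3 := ⟨m - 3, by omega⟩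
  rfl

section Rels
variable {F : Type} [Field F] {k : ℕ} (P L : ℕ → F)
  (heq : ∀ m, 1 ≤ m → m < k → L m - P m = rhsD P L m)

include heq

lemma rel1 (hk : 2 ≤ k) : ∀ i, 1 ≤ i → 4 * i ≤ k + 2 →
    ddD L i = ddD P i + L 0 * hiD true P (i - 1)
  | 0, h, _ => by omega
  | 1, _, _ => by
    have h := heq 1 (by omega) (by omega)
    simp only [rhsD] at h
    simp only [ddD, hiD, reduceIte]; linear_combination h
  | (j + 2), _, hik => by
    have h := heq (4*j+4) (by omega) (by omega)
    rw [rhsD_big _ _ _ (by omega), if_pos (by omega)] at h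
    have h2 : 4*j+4-2 = 4*j+2 := by omega
    rw [h2] at h
    show L (4*j+4) = P (4*j+4) + L 0 * hiD true P (j+1)
    match j, h with
    | 0, h => simp only [hiD]; linear_combination h
    | (j' + 1), h =>
      show L (4*(j'+1)+4) = P (4*(j'+1)+4) + L 0 * hiD true P (j'+2)
      have e : 4 * (j'+1) + 2 = 4 * j' + 6 := by omega
      rw [e] at h
      simp only [hiD]; linear_combination h

lemma rel2 (hk : 2 ≤ k) : ∀ i, i ≤ (k+2)/4 →
    dd'D L i = dd'D P i + loD false L i * P 0
  | 0, _ => by simp [dd'D, loD]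
  | 1, _ => by
    have h := heq 1 (by omega) (by omega)
    simp only [rhsD] at h
    simp only [dd'D, loD]; norm_num; linear_combination h
  | (j + 2), hik => by
    have hk4 : 4 * ((k+2)/4) ≤ k + 2 := by omega
    have h := heq (4*j+5) (by omega) (by omega)
    rw [rhsD_big _ _ _ (by omega), if_neg (by omega)] at h
    have h2 : 4*j+5-2 = 4*j+3 := by omega
    rw [h2] at h
    simp only [dd'D, loD]; norm_num; linear_combination h

lemma rel3 (hk : 6 ≤ k) : ∀ i, i + 1 ≤ (k+2)/4 →
    hiD false L i = hiD true P i + ddD L i * P 0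
  | 0, _ => by simp [hiD, ddD]
  | 1, _ => by
    have h := heq 2 (by omega) (by omega)
    simp only [rhsD] at h
    simp only [hiD, ddD]; linear_combination h
  | (j + 2), hik => by
    have hk4 : 4 * ((k+2)/4) ≤ k + 2 := by omega
    have h := heq (4*j+6) (by omega) (by omega)
    rw [rhsD_big _ _ _ (by omega), if_neg (by omega)] at h
    have h2 : 4*j+6-2 = 4*j+4 := by omega
    rw [h2] at h
    simp only [hiD, ddD]; linear_combination h

lemma rel4 (hk : 2 ≤ k) : ∀ i, 1 ≤ i → 4 * i ≤ k + 2 →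
    loD false L i = loD true P i + L 0 * dd'D P (i - 1)
  | 0, h, _ => by omega
  | 1, _, _ => by simp [loD, dd'D]
  | (j + 2), _, hik => by
    have h := heq (4*j+3) (by omega) (by omega)
    rw [rhsD_big _ _ _ (by omega), if_pos (by omega)] at h
    have h2 : 4*j+3-2 = 4*j+1 := by omega
    rw [h2] at h
    show L (4*j+3) = loD true P (j+2) + L 0 * dd'D P (j+1)
    match j, h with
    | 0, h => simp only [loD, dd'D]; linear_combination h
    | (j' + 1), h =>
      show L (4*(j'+1)+3) = loD true P (j'+3) + L 0 * dd'D P (j'+2)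
      have e : 4 * (j'+1) + 1 = 4 * j' + 5 := by omega
      rw [e] at h
      simp only [loD, dd'D]; linear_combination h

end Rels

lemma aD_adj {F : Type} [Field F] {k : ℕ} (p l : Fin k → F) (h : incD k p l)
    (r : ℕ) (hr2 : 2 ≤ r) (hrt : r ≤ (k+2)/4) :
    aD r (Sum.inl p : (Fin k → F) ⊕ (Fin k → F)) = aD r (Sum.inr l) := by
  have hk6 : 6 ≤ k := by omega
  set P := extD p with hP
  set L := extD l with hL
  have heq : ∀ m, 1 ≤ m → m < k → L m - P m = rhsD P L m := h
  simp only [aD, Sum.elim_inl, Sum.elim_inr, Sum.isLeft_inl, Sum.isLeft_inr, id]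
  refine (keyD r (ddD P) (dd'D P) (hiD true P) (loD true P)
      (ddD L) (dd'D L) (hiD false L) (loD false L) (L 0) (P 0)
      rfl rfl rfl ?_ ?_ ?_ ?_).symm
  · exact fun i h1 h2 => rel1 P L heq (by omega) i h1 (by omega)
  · exact fun i hi => rel2 P L heq (by omega) i (by omega)
  · exact fun i hi => rel3 P L heq hk6 i (by omega)
  · exact fun i h1 h2 => rel4 P L heq (by omega) i h1 (by omega)

lemma aVec_adj {F : Type} [Field F] {k : ℕ}
    {u v : (Fin k → F) ⊕ (Fin k → F)} (h : (DGraph k F).Adj u v) :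
    aVecD ((k + 2) / 4) u = aVecD ((k + 2) / 4) v := by
  funext j
  have hj : (j : ℕ) < (k+2)/4 - 1 := j.isLt
  simp only [aVecD]
  match u, v, h with
  | Sum.inl p, Sum.inr l, h =>
    exact aD_adj p l h _ (by omega) (by omega)
  | Sum.inr l, Sum.inl p, h =>
    exact (aD_adj p l h _ (by omega) (by omega)).symm


/-- The map `a` is constant on each connected component of `D(k,q)`: vertices
lying in the same connected component have the same vector of invariants. -/
theorem statement6 (q k : ℕ) (hk : 2 ≤ k) (F : Type) [Field F] [Fintype F]
    (hF : Fintype.card F = q) (x y : (Fin k → F) ⊕ (Fin k → F))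
    (hxy : (DGraph k F).connectedComponentMk x = (DGraph k F).connectedComponentMk y) :
    aVecD ((k + 2) / 4) x = aVecD ((k + 2) / 4) y := by
  have hreach := SimpleGraph.ConnectedComponent.exact hxy
  obtain ⟨w⟩ := hreach
  clear hxy
  induction w with
  | nil => rfl
  | cons hadj _ ih => exact (aVec_adj hadj).trans ih
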